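/- Let (X,μ) be a probability space and f ∈ L^∞(X,μ)⁺, h ∈ L^∞(X,μ)⁺ with f ≤ h a.e. and v a real number with ∫_X f dμ ≤ v ≤ ∫_X h dμ. Let c = c(v) be the unique level with ∫_X max{f,c} dμ = v. Then max{f, c} ≺_w h (the waterfilling of f at level c is submajorized by h). -/

import Mathlib

open MeasureTheory

/-- The decreasing rearrangement of `f` with respect to `μ`:
`f*(s) = sup { t ≥ 0 : μ{x : f(x) > t} > s }`. -/
noncomputable def decRe {X : Type*} [MeasurableSpace X] (μ : Measure X) (f : X → ℝ) (s : ℝ) : ℝ :=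
  sSup {t : ℝ | 0 ≤ t ∧ s < (μ {x | t < f x}).toReal}

/-- Submajorization `g ≺_w f` of functions on a measure space. -/
def SubMaj {X : Type*} [MeasurableSpace X] (μ : Measure X) (g f : X → ℝ) : Prop :=
  ∀ s ∈ Set.Icc (0 : ℝ) 1, ∫ t in (0 : ℝ)..s, decRe μ g t ≤ ∫ t in (0 : ℝ)..s, decRe μ f t

/-- Majorization `g ≺ f` of functions on a measure space. -/
def MajF {X : Type*} [MeasurableSpace X] (μ : Measure X) (g f : X → ℝ) : Prop :=
  SubMaj μ g f ∧ (∫ t in (0 : ℝ)..1, decRe μ g t) = ∫ t in (0 : ℝ)..1, decRe μ f t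

section Aux
open Set

variable {X : Type*} [MeasurableSpace X] (μ : Measure X)

lemma decRe_nonneg (f : X → ℝ) (s : ℝ) : 0 ≤ decRe μ f s :=
  Real.sSup_nonneg (fun _ ht => ht.1)

lemma decRe_set_subset {f : X → ℝ} {C : ℝ} (hC : ∀ x, f x ≤ C) {s : ℝ} (hs : 0 ≤ s) :
    {t : ℝ | 0 ≤ t ∧ s < (μ {x | t < f x}).toReal} ⊆ Set.Icc 0 C := by
  intro t ht
  refine ⟨ht.1, ?_⟩
  by_contra hlt
  push_neg at hlt
  have he : {x | t < f x} = (∅ : Set X) := by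
    ext x; simp only [mem_setOf_eq, mem_empty_iff_false, iff_false, not_lt]
    exact (hC x).trans hlt.le
  obtain ⟨ht0, ht2⟩ := ht
  rw [he] at ht2
  simp at ht2
  linarith

lemma decRe_bddAbove {f : X → ℝ} {C : ℝ} (hC : ∀ x, f x ≤ C) {s : ℝ} (hs : 0 ≤ s) :
    BddAbove {t : ℝ | 0 ≤ t ∧ s < (μ {x | t < f x}).toReal} :=
  BddAbove.mono (decRe_set_subset μ hC hs) (bddAbove_Icc)

lemma decRe_le {f : X → ℝ} {C : ℝ} (hC : ∀ x, f x ≤ C) {s : ℝ} (hs : 0 ≤ s) :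
    decRe μ f s ≤ max C 0 :=
  Real.sSup_le (fun t ht => le_max_of_le_left (decRe_set_subset μ hC hs ht).2)
    (le_max_right _ _)

lemma decRe_antitoneOn {f : X → ℝ} {C : ℝ} (hC : ∀ x, f x ≤ C) :
    AntitoneOn (decRe μ f) (Set.Ici 0) := by
  intro s hs s' hs' hss
  refine Real.sSup_le (fun t ht => ?_) (decRe_nonneg μ f s)
  exact le_csSup (decRe_bddAbove μ hC hs) ⟨ht.1, lt_of_le_of_lt hss ht.2⟩

lemma lt_decRe_iff [IsFiniteMeasure μ] {f : X → ℝ} {C : ℝ} (hC : ∀ x, f x ≤ C)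
    {s t : ℝ} (hs : 0 ≤ s) (ht : 0 ≤ t) :
    t < decRe μ f s ↔ s < (μ {x | t < f x}).toReal := by
  constructor
  · intro hlt
    have hne : {t' : ℝ | 0 ≤ t' ∧ s < (μ {x | t' < f x}).toReal}.Nonempty := by
      by_contra hemp
      rw [Set.not_nonempty_iff_eq_empty] at hemp
      rw [decRe, hemp, Real.sSup_empty] at hlt
      exact absurd (ht.trans_lt hlt) (lt_irrefl _)
    obtain ⟨t', ht', htt'⟩ := exists_lt_of_lt_csSup hne hlt
    calc s < (μ {x | t' < f x}).toReal := ht'.2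
      _ ≤ (μ {x | t < f x}).toReal :=
        ENNReal.toReal_mono (measure_ne_top μ _)
          (measure_mono (fun x hx => htt'.trans hx))
  · intro hlt
    have hofReal : ENNReal.ofReal s < μ {x | t < f x} :=
      (ENNReal.ofReal_lt_iff_lt_toReal hs (measure_ne_top μ _)).2 hlt
    have hunion : {x | t < f x} = ⋃ n : ℕ, {x | t + 1 / (n + 1) < f x} := by
      ext x
      simp only [mem_setOf_eq, mem_iUnion]
      constructor
      · intro hx
        obtain ⟨n, hn⟩ := exists_nat_one_div_lt (sub_pos.2 hx)
        exact ⟨n, by push_cast at hn ⊢; linarith⟩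
      · rintro ⟨n, hn⟩
        have : (0:ℝ) < 1 / (n + 1) := by positivity
        linarith
    have hdir : Directed (· ⊆ ·) (fun n : ℕ => {x | t + 1 / (n + 1) < f x}) := by
      intro m n
      refine ⟨max m n, fun x hx => ?_, fun x hx => ?_⟩ <;>
      · simp only [mem_setOf_eq] at hx ⊢
        refine lt_of_le_of_lt (add_le_add_right ?_ t) hx
        apply one_div_le_one_div_of_le
        · positivity
        · push_cast
          simp [add_le_add_iff_right]
    rw [hunion, hdir.measure_iUnion] at hofReal
    obtain ⟨n, hn⟩ := lt_iSup_iff.1 hofReal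
    have hsn : s < (μ {x | t + 1 / (n + 1) < f x}).toReal :=
      (ENNReal.ofReal_lt_iff_lt_toReal hs (measure_ne_top μ _)).1 hn
    have h1 : (0:ℝ) < 1 / ((n:ℝ) + 1) := by positivity
    calc t < t + 1 / (n + 1) := by linarith
      _ ≤ decRe μ f s := le_csSup (decRe_bddAbove μ hC hs) ⟨by linarith, hsn⟩

lemma integral_decRe [IsProbabilityMeasure μ] {f : X → ℝ} (hf : Measurable f)
    {C : ℝ} (hC : ∀ x, f x ≤ C) (hpos : ∀ x, 0 ≤ f x) :
    ∫ s in (0:ℝ)..1, decRe μ f s = ∫ x, f x ∂μ := by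
  set F : ℝ → ℝ := fun s => decRe μ f (max s 0) with hF
  have hanti : Antitone F := by
    intro s s' hss
    exact decRe_antitoneOn μ hC (le_max_right s 0) (le_max_right s' 0)
      (max_le_max hss le_rfl)
  have hFmeas : Measurable F := hanti.measurable
  have h1 : ∫ s in (0:ℝ)..1, decRe μ f s = ∫ s in Set.Ioc (0:ℝ) 1, F s := by
    rw [intervalIntegral.integral_of_le (by norm_num : (0:ℝ) ≤ 1)]
    refine setIntegral_congr_fun measurableSet_Ioc (fun s hs => ?_)
    simp [hF, max_eq_left hs.1.le]
  have h2 : ∫ s in Set.Ioc (0:ℝ) 1, F s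
      = (∫⁻ s in Set.Ioc (0:ℝ) 1, ENNReal.ofReal (F s)).toReal := by
    rw [integral_eq_lintegral_of_nonneg_ae
      (Filter.Eventually.of_forall (fun s => decRe_nonneg μ f _))
      hFmeas.aestronglyMeasurable]
  have h3 : ∫ x, f x ∂μ = (∫⁻ x, ENNReal.ofReal (f x) ∂μ).toReal := by
    rw [integral_eq_lintegral_of_nonneg_ae
      (Filter.Eventually.of_forall hpos) hf.aestronglyMeasurable]
  have hlay1 : ∫⁻ s in Set.Ioc (0:ℝ) 1, ENNReal.ofReal (F s)
      = ∫⁻ t in Set.Ioi (0:ℝ), (volume.restrict (Set.Ioc (0:ℝ) 1)) {s | t < F s} :=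
    lintegral_eq_lintegral_meas_lt _ (Filter.Eventually.of_forall (fun s => decRe_nonneg μ f _))
      hFmeas.aemeasurable
  have hlay2 : ∫⁻ x, ENNReal.ofReal (f x) ∂μ = ∫⁻ t in Set.Ioi (0:ℝ), μ {x | t < f x} :=
    lintegral_eq_lintegral_meas_lt μ (Filter.Eventually.of_forall hpos) hf.aemeasurable
  have hkey : ∀ t ∈ Set.Ioi (0:ℝ),
      (volume.restrict (Set.Ioc (0:ℝ) 1)) {s | t < F s} = μ {x | t < f x} := by
    intro t ht
    have htpos : (0:ℝ) < t := ht
    rw [Measure.restrict_apply (measurableSet_lt measurable_const hFmeas)]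
    have hm1 : (μ {x | t < f x}).toReal ≤ 1 := by
      rw [← ENNReal.toReal_one]
      exact ENNReal.toReal_mono ENNReal.one_ne_top prob_le_one
    have hseteq : {s | t < F s} ∩ Set.Ioc (0:ℝ) 1 = Set.Ioo 0 ((μ {x | t < f x}).toReal) := by
      ext s
      simp only [mem_inter_iff, mem_setOf_eq, mem_Ioc, mem_Ioo]
      constructor
      · rintro ⟨hts, hs0, hs1⟩
        have hts' : t < decRe μ f s := by simpa [hF, sup_eq_left.2 hs0.le] using hts
        exact ⟨hs0, (lt_decRe_iff μ hC hs0.le htpos.le).1 hts'⟩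
      · rintro ⟨hs0, hsm⟩
        refine ⟨?_, hs0, hsm.le.trans hm1⟩
        have hts' : t < decRe μ f s := (lt_decRe_iff μ hC hs0.le htpos.le).2 hsm
        simpa [hF, sup_eq_left.2 hs0.le] using hts'
    rw [hseteq, Real.volume_Ioo, sub_zero,
      ENNReal.ofReal_toReal (measure_ne_top μ _)]
  rw [h1, h2, h3, hlay1, hlay2, setLIntegral_congr_fun measurableSet_Ioi
    hkey]

end Aux


/-- the waterfilling of `f` at the level `c = c(v)` is submajorized by any
`h ≥ f` with `∫ f ≤ v ≤ ∫ h`. -/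
theorem waterfilling_submajorized {X : Type*} [MeasurableSpace X] (μ : Measure X)
    [IsProbabilityMeasure μ] (f h : X → ℝ) (hf : Measurable f) (hh : Measurable h)
    (hfb : ∃ C : ℝ, ∀ x, f x ≤ C) (hhb : ∃ C : ℝ, ∀ x, h x ≤ C)
    (hfpos : ∀ x, 0 ≤ f x) (hhpos : ∀ x, 0 ≤ h x)
    (hfh : ∀ᵐ x ∂μ, f x ≤ h x)
    (v : ℝ) (hv1 : (∫ x, f x ∂μ) ≤ v) (hv2 : v ≤ ∫ x, h x ∂μ)
    (c : ℝ) (hc : essInf f μ ≤ c) (hcv : (∫ x, max (f x) c ∂μ) = v) :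
    SubMaj μ (fun x => max (f x) c) h := by
  obtain ⟨C, hCf⟩ := hfb
  obtain ⟨D, hDh⟩ := hhb
  set g : X → ℝ := fun x => max (f x) c with hgdef
  have hgmeas : Measurable g := hf.max measurable_const
  have hgC : ∀ x, g x ≤ max C c := fun x => max_le_max (hCf x) le_rfl
  have hgpos : ∀ x, 0 ≤ g x := fun x => (hfpos x).trans (le_max_left _ _)
  have hGH : ∀ s : ℝ, 0 ≤ s → c ≤ decRe μ h s → decRe μ g s ≤ decRe μ h s := by
    intro s hs hcH
    refine Real.sSup_le (fun t ht => ?_) (decRe_nonneg μ h s)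
    rcases lt_or_ge t c with htc | hct
    · exact htc.le.trans hcH
    · have hseteq : {x | t < g x} = {x | t < f x} := by
        ext x
        simp only [hgdef, Set.mem_setOf_eq, lt_max_iff]
        exact or_iff_left (not_lt.2 hct)
      have hmono : μ {x | t < f x} ≤ μ {x | t < h x} := by
        apply measure_mono_ae
        filter_upwards [hfh] with x hx hx2
        exact lt_of_lt_of_le hx2 hx
      have hsh : s < (μ {x | t < h x}).toReal := by
        refine lt_of_lt_of_le ?_ (ENNReal.toReal_mono (measure_ne_top μ _) hmono)
        rw [← hseteq]
        exact ht.2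
      exact le_csSup (decRe_bddAbove μ hDh hs) ⟨ht.1, hsh⟩
  have hcG : ∀ s : ℝ, 0 ≤ s → s < 1 → c ≤ decRe μ g s := by
    intro s hs hs1
    rcases le_or_gt c 0 with hc0 | hc0
    · exact hc0.trans (decRe_nonneg μ g s)
    by_contra hcon
    push_neg at hcon
    have hG0 : 0 ≤ decRe μ g s := decRe_nonneg μ g s
    set t := (decRe μ g s + c) / 2 with htdef
    have h1 : decRe μ g s < t := by rw [htdef]; linarith
    have ht0 : 0 ≤ t := by rw [htdef]; linarith
    have htc : t < c := by rw [htdef]; linarith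
    have huniv : {x | t < g x} = Set.univ := by
      ext x
      simp only [hgdef, Set.mem_setOf_eq, lt_max_iff, Set.mem_univ, iff_true]
      exact Or.inr htc
    have hst : s < (μ {x | t < g x}).toReal := by
      rw [huniv, measure_univ]
      simpa using hs1
    have h2 : t ≤ decRe μ g s := le_csSup (decRe_bddAbove μ hgC hs) ⟨ht0, hst⟩
    linarith
  have hintG : ∫ s in (0:ℝ)..1, decRe μ g s = v :=
    (integral_decRe μ hgmeas hgC hgpos).trans hcv
  have hintH : ∫ s in (0:ℝ)..1, decRe μ h s = ∫ x, h x ∂μ :=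
    integral_decRe μ hh hDh hhpos
  have hGanti := decRe_antitoneOn μ hgC
  have hHanti := decRe_antitoneOn μ hDh
  have hsub : ∀ a b : ℝ, 0 ≤ a → 0 ≤ b → Set.uIcc a b ⊆ Set.Ici 0 :=
    fun a b ha hb x hx => le_trans (le_min ha hb) hx.1
  have hGint : ∀ a b : ℝ, 0 ≤ a → 0 ≤ b → IntervalIntegrable (decRe μ g) volume a b :=
    fun a b ha hb => (hGanti.mono (hsub a b ha hb)).intervalIntegrable
  have hHint : ∀ a b : ℝ, 0 ≤ a → 0 ≤ b → IntervalIntegrable (decRe μ h) volume a b :=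
    fun a b ha hb => (hHanti.mono (hsub a b ha hb)).intervalIntegrable
  intro s₁ hs₁
  obtain ⟨hs₁0, hs₁1⟩ := hs₁
  show ∫ s in (0:ℝ)..s₁, decRe μ g s ≤ ∫ s in (0:ℝ)..s₁, decRe μ h s
  by_cases hcase : ∀ s ∈ Set.Ioc (0:ℝ) s₁, c ≤ decRe μ h s
  · rw [intervalIntegral.integral_of_le hs₁0, intervalIntegral.integral_of_le hs₁0]
    exact setIntegral_mono_on ((hGint 0 s₁ le_rfl hs₁0).1) ((hHint 0 s₁ le_rfl hs₁0).1)
      measurableSet_Ioc (fun s hs => hGH s hs.1.le (hcase s hs))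
  · push_neg at hcase
    obtain ⟨s', hs'mem, hs'lt⟩ := hcase
    have key : ∫ s in s₁..1, decRe μ h s ≤ ∫ s in s₁..1, decRe μ g s := by
      rw [intervalIntegral.integral_of_le hs₁1, intervalIntegral.integral_of_le hs₁1,
        integral_Ioc_eq_integral_Ioo, integral_Ioc_eq_integral_Ioo]
      refine setIntegral_mono_on ((hHint s₁ 1 hs₁0 zero_le_one).1.mono_set
        Set.Ioo_subset_Ioc_self) ((hGint s₁ 1 hs₁0 zero_le_one).1.mono_set
        Set.Ioo_subset_Ioc_self) measurableSet_Ioo (fun s hs => ?_)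
      have hs0 : (0:ℝ) ≤ s := hs₁0.trans hs.1.le
      have hH1 : decRe μ h s ≤ decRe μ h s' :=
        hHanti hs'mem.1.le hs0 (hs'mem.2.trans hs.1.le)
      have hG1 : c ≤ decRe μ g s := hcG s hs0 hs.2
      linarith
    have add1 : (∫ s in (0:ℝ)..s₁, decRe μ g s) + ∫ s in s₁..1, decRe μ g s
        = ∫ s in (0:ℝ)..1, decRe μ g s :=
      intervalIntegral.integral_add_adjacent_intervals (hGint 0 s₁ le_rfl hs₁0)
        (hGint s₁ 1 hs₁0 zero_le_one)
    have add2 : (∫ s in (0:ℝ)..s₁, decRe μ h s) + ∫ s in s₁..1, decRe μ h s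
        = ∫ s in (0:ℝ)..1, decRe μ h s :=
      intervalIntegral.integral_add_adjacent_intervals (hHint 0 s₁ le_rfl hs₁0)
        (hHint s₁ 1 hs₁0 zero_le_one)
    have hv2' : v ≤ ∫ s in (0:ℝ)..1, decRe μ h s := by rw [hintH]; exact hv2
    linarith [hintG]
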